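/- Let G be the family of substructures N* ⊆ M of cardinality κ such that for some level-1 model N of the canonical tree S_K there is an isomorphism f : N → N* with M ⊨ φ_{N,λ,1}[⟨f(a*_α) : α < κ⟩]. Then any two members N*₁ ⊆ N*₂ of G satisfy N*₁ ≺_K N*₂. -/

import Mathlib

/- Framework: abstract elementary classes over a first-order vocabulary `τ`,
the canonical tree of an a.e.c. and the (semantics of the) canonical formulas
`φ_{N,γ,n}` of Shelah–Villaveces. -/

open FirstOrder Cardinal

universe u

/-- A bundled `τ`-structure. -/
structure BStr (τ : FirstOrder.Language.{u, u}) : Type (u + 1) where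
  α : Type u
  str : τ.Structure α

attribute [instance] BStr.str

/-- The data of an abstract class of `τ`-structures: a class `K` of structures together
with a distinguished ("strong", `≺_K`) notion of embedding. -/
structure AECData (τ : FirstOrder.Language.{u, u}) : Type (u + 1) where
  K : Set (BStr τ)
  strong : ∀ {X Y : Type u} [τ.Structure X] [τ.Structure Y], (X ↪[τ] Y) → Prop

variable {τ : FirstOrder.Language.{u, u}}

/-- Bundle a substructure of (the carrier of) a bundled structure. -/
def BStr.ofSub (M : BStr τ) (S : τ.Substructure M.α) : BStr τ :=
  ⟨S, inferInstance⟩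

/-- The function `f` is (the underlying function of) a `τ`-embedding. -/
def IsEmbFun (τ : FirstOrder.Language.{u, u}) {X Y : Type u} (sX : τ.Structure X) (sY : τ.Structure Y)
    (f : X → Y) : Prop :=
  letI := sX; letI := sY
  ∃ e : X ↪[τ] Y, ⇑e = f

/-- The function `f` is (the underlying function of) a strong (`≺_K`-) embedding. -/
def IsStrongFun (A : AECData τ) {X Y : Type u} (sX : τ.Structure X) (sY : τ.Structure Y)
    (f : X → Y) : Prop :=
  letI := sX; letI := sY
  ∃ e : X ↪[τ] Y, ⇑e = f ∧ A.strong e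

/-- The axioms of an abstract elementary class with LST number `κ`
(together with the convention that all models have size `≥ κ`). -/
structure AECAxioms (A : AECData τ) (κ : Cardinal.{u}) : Prop where
  infinite_lst : ℵ₀ ≤ κ
  card_le : τ.card ≤ κ
  min_card : ∀ M ∈ A.K, κ ≤ #M.α
  iso_closed : ∀ M N : BStr τ, M ∈ A.K → (M.α ≃[τ] N.α) → N ∈ A.K
  strong_mem : ∀ (M N : BStr τ) (e : M.α ↪[τ] N.α), A.strong e → M ∈ A.K ∧ N ∈ A.K
  strong_refl : ∀ M ∈ A.K, A.strong (Language.Embedding.refl τ M.α)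
  strong_trans : ∀ (M N P : BStr τ) (f : M.α ↪[τ] N.α) (g : N.α ↪[τ] P.α),
    A.strong f → A.strong g → A.strong (g.comp f)
  strong_iso : ∀ (M M' N N' : BStr τ) (e₁ : M'.α ≃[τ] M.α) (f : M.α ↪[τ] N.α)
    (e₂ : N.α ≃[τ] N'.α), A.strong f → A.strong ((e₂.toEmbedding.comp f).comp e₁.toEmbedding)
  coherence : ∀ (M N P : BStr τ) (f : M.α ↪[τ] N.α) (g : N.α ↪[τ] P.α),
    A.strong (g.comp f) → A.strong g → A.strong f
  union : ∀ (M : BStr τ) (ι : Type u), Nonempty ι → ∀ S : ι → τ.Substructure M.α,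
    (∀ i j, ∃ k, S i ≤ S k ∧ S j ≤ S k) →
    (∀ i, M.ofSub (S i) ∈ A.K) →
    (∀ i j (h : S i ≤ S j), A.strong (Language.Substructure.inclusion h)) →
    (∀ x : M.α, ∃ i, x ∈ S i) →
    M ∈ A.K ∧ ∀ i, A.strong (S i).subtype
  lst : ∀ M ∈ A.K, ∀ s : Set M.α, #s ≤ κ →
    ∃ S : τ.Substructure M.α, s ⊆ ↑S ∧ #S = κ ∧ A.strong S.subtype

/-- The universe `{a*_α : α < κ·n}` of a level-`n` model of the canonical tree:
we identify `a*_{κ·k+ζ}` with the pair `(k, ζ)`, where `B` is a set of size `κ`. -/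
def Lev (B : Type u) (n : ℕ) : Type u := {p : ℕ × B // p.1 < n}

/-- The inclusion of the first `κ·m` canonical elements into the first `κ·n`. -/
def Lev.incl {B : Type u} {m n : ℕ} (h : m ≤ n) : Lev B m → Lev B n :=
  fun p => ⟨p.1, lt_of_lt_of_le p.2 h⟩

/-- Level `n` of the canonical tree `S_K`: structures on `{a*_α : α < κ·n}` lying in `K`
all of whose restrictions to initial segments `{a*_α : α < κ·m}` are strong submodels. -/
def SNode (A : AECData τ) (B : Type u) (n : ℕ) : Set (τ.Structure (Lev B n)) :=
  fun N =>
    letI := N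
    (⟨Lev B n, N⟩ : BStr τ) ∈ A.K ∧
      ∀ m, ∀ hm : m < n, ∃ S : τ.Substructure (Lev B n),
        (S : Set (Lev B n)) = Set.range (Lev.incl (le_of_lt hm)) ∧ A.strong S.subtype

/-- `N ⊆ N'` for canonical-tree models: the canonical inclusion is a `τ`-embedding. -/
def TreeSub {B : Type u} {m n : ℕ} (h : m ≤ n) (N : τ.Structure (Lev B m))
    (N' : τ.Structure (Lev B n)) : Prop :=
  IsEmbFun τ N N' (Lev.incl h)

/-- `N ≺_K N'` for canonical-tree models: the canonical inclusion is a strong embedding. -/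
def TreeStrong (A : AECData τ) {B : Type u} {m n : ℕ} (h : m ≤ n) (N : τ.Structure (Lev B m))
    (N' : τ.Structure (Lev B n)) : Prop :=
  IsStrongFun A N N' (Lev.incl h)

/-- Satisfaction in `M` of the canonical formulas: `SatF A B M γ n N f` says that
`M ⊨ φ_{N,γ,n+1}[⟨f(a*_α) : α < κ·(n+1)⟩]`, for `N` a structure at level `n+1`.
Defined by recursion on `γ`: at `0` it is satisfaction of the atomic diagram of `N`;
at limits, the conjunction of the earlier stages; at `β+1` it says that every `κ`-tuple
`z` of `M` is covered by an extension of `f` to a copy of some `N' ∈ S_{n+2}` strongly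
extending `N` and satisfying the stage-`β` formula. -/
noncomputable def SatF (A : AECData τ) (B : Type u) (M : BStr τ) (γ : Ordinal.{u}) :
    ∀ n : ℕ, τ.Structure (Lev B (n + 1)) → (Lev B (n + 1) → M.α) → Prop :=
  Ordinal.limitRecOn
    (motive := fun _ => ∀ n : ℕ, τ.Structure (Lev B (n + 1)) → (Lev B (n + 1) → M.α) → Prop) γ
    (fun _n N f => IsEmbFun τ N M.str f)
    (fun _β ih n N f =>
      ∀ z : B → M.α, ∃ N' : τ.Structure (Lev B (n + 2)),
        N' ∈ SNode A B (n + 2) ∧ TreeStrong A (Nat.le_succ _) N N' ∧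
        ∃ g : Lev B (n + 2) → M.α, g ∘ Lev.incl (Nat.le_succ _) = f ∧
          ih (n + 1) N' g ∧ ∀ b : B, ∃ p, z b = g p)
    (fun _γ' _ ih n N f => ∀ β, ∀ hβ : β < _γ', ih β hβ n N f)

/-- Satisfaction in `M` of the canonical sentences `φ_{γ,0}`. -/
noncomputable def Sat0 (A : AECData τ) (B : Type u) (M : BStr τ) (γ : Ordinal.{u}) : Prop :=
  Ordinal.limitRecOn (motive := fun _ => Prop) γ
    True
    (fun β _ =>
      ∀ z : B → M.α, ∃ N' : τ.Structure (Lev B 1), N' ∈ SNode A B 1 ∧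
        ∃ g : Lev B 1 → M.α, SatF A B M β 0 N' g ∧ ∀ b : B, ∃ p, z b = g p)
    (fun _γ' _ ih => ∀ β, ∀ hβ : β < _γ', ih β hβ)

variable {τ : FirstOrder.Language.{u, u}}

/-- The family `G` of κ-sized substructures `N* ⊆ M` which are images of some level-1
canonical-tree model `N` under an isomorphism `f` with `M ⊨ φ_{N,γ,1}[⟨f(a*_α) : α<κ⟩]`. -/
def CanonG (A : AECData τ) (B : Type u) (κ : Cardinal.{u}) (M : BStr τ)
    (γ : Ordinal.{u}) : Set (τ.Substructure M.α) :=
  {S | #S = κ ∧ ∃ N ∈ SNode A B 1, ∃ f : Lev B 1 → M.α,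
      IsEmbFun τ N M.str f ∧ Set.range f = (S : Set M.α) ∧ SatF A B M γ 0 N f}


/-! ### Auxiliary development -/

section Auxiliary

open FirstOrder Language

namespace CanonAux

theorem isEmbFun_def {X Y : Type u} (sX : τ.Structure X) (sY : τ.Structure Y) (f : X → Y) :
    IsEmbFun τ sX sY f ↔ ∃ e : @Language.Embedding τ X Y sX sY, ⇑e = f := Iff.rfl

theorem isStrongFun_def (A : AECData τ) {X Y : Type u} (sX : τ.Structure X)
    (sY : τ.Structure Y) (f : X → Y) :
    IsStrongFun A sX sY f ↔
      ∃ e : @Language.Embedding τ X Y sX sY, ⇑e = f ∧ A.strong e := Iff.rfl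

theorem treeStrong_def (A : AECData τ) {B : Type u} {m n : ℕ} (h : m ≤ n)
    (N : τ.Structure (Lev B m)) (N' : τ.Structure (Lev B n)) :
    TreeStrong A h N N' ↔
      ∃ e : @Language.Embedding τ (Lev B m) (Lev B n) N N', ⇑e = Lev.incl h ∧ A.strong e :=
  Iff.rfl

theorem strong_congr (A : AECData τ) {X Y : Type u} [τ.Structure X] [τ.Structure Y]
    {e e' : X ↪[τ] Y} (h : ∀ x, e x = e' x) (hs : A.strong e) : A.strong e' := by
  have he : e = e' := Language.Embedding.ext h
  rwa [he] at hs

theorem emb_apply_equivRange_symm {X Y : Type u} [τ.Structure X] [τ.Structure Y]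
    (g : X ↪[τ] Y) (s : g.toHom.range) : g (g.equivRange.symm s) = (s : Y) := by
  have h1 : g (g.equivRange.symm s)
      = ((g.equivRange (g.equivRange.symm s) : g.toHom.range) : Y) := rfl
  rw [h1, g.equivRange.apply_symm_apply]

theorem range_le_range {X Y Z : Type u} [τ.Structure X] [τ.Structure Y] [τ.Structure Z]
    (hemb : X ↪[τ] Z) (gemb : Y ↪[τ] Z) (hr : ∀ x, ∃ y, gemb y = hemb x) :
    hemb.toHom.range ≤ gemb.toHom.range := by
  intro z hz
  obtain ⟨x, hx⟩ := Hom.mem_range.1 hz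
  obtain ⟨y, hy⟩ := hr x
  exact Hom.mem_range.2 ⟨y, by simp only [Embedding.coe_toHom] at hx ⊢; rw [hy, hx]⟩

/-- factor an embedding through another one with larger range. -/
noncomputable def factorEmb {X Y Z : Type u} [τ.Structure X] [τ.Structure Y] [τ.Structure Z]
    (hemb : X ↪[τ] Z) (gemb : Y ↪[τ] Z) (hr : ∀ x, ∃ y, gemb y = hemb x) : X ↪[τ] Y :=
  (gemb.equivRange.symm.toEmbedding.comp
    (Substructure.inclusion (range_le_range hemb gemb hr))).comp hemb.equivRange.toEmbedding

theorem factorEmb_prop {X Y Z : Type u} [τ.Structure X] [τ.Structure Y] [τ.Structure Z]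
    (hemb : X ↪[τ] Z) (gemb : Y ↪[τ] Z) (hr : ∀ x, ∃ y, gemb y = hemb x) (x : X) :
    gemb (factorEmb hemb gemb hr x) = hemb x := by
  have h1 : gemb (factorEmb hemb gemb hr x)
      = gemb (gemb.equivRange.symm
          ((Substructure.inclusion (range_le_range hemb gemb hr)) (hemb.equivRange x))) := rfl
  rw [h1, emb_apply_equivRange_symm]
  rfl

section SatF

variable (A : AECData τ) (B : Type u) (M : BStr τ)

theorem satF_zero (n : ℕ) (N : τ.Structure (Lev B (n + 1))) (f : Lev B (n + 1) → M.α) :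
    SatF A B M 0 n N f ↔ IsEmbFun τ N M.str f := by
  unfold SatF
  rw [Ordinal.limitRecOn_zero]

theorem satF_succ (β : Ordinal.{u}) (n : ℕ) (N : τ.Structure (Lev B (n + 1)))
    (f : Lev B (n + 1) → M.α) :
    SatF A B M (Order.succ β) n N f ↔
      ∀ z : B → M.α, ∃ N' : τ.Structure (Lev B (n + 2)),
        N' ∈ SNode A B (n + 2) ∧ TreeStrong A (Nat.le_succ _) N N' ∧
        ∃ g : Lev B (n + 2) → M.α, g ∘ Lev.incl (Nat.le_succ _) = f ∧
          SatF A B M β (n + 1) N' g ∧ ∀ b : B, ∃ p, z b = g p := by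
  unfold SatF
  rw [Ordinal.limitRecOn_succ]

theorem satF_limit {γ : Ordinal.{u}} (hγ : Order.IsSuccLimit γ) (n : ℕ)
    (N : τ.Structure (Lev B (n + 1))) (f : Lev B (n + 1) → M.α) :
    SatF A B M γ n N f ↔ ∀ β < γ, SatF A B M β n N f := by
  unfold SatF
  rw [Ordinal.limitRecOn_limit _ _ _ _ hγ]

theorem satF_mono (hBne : Nonempty B) (hMne : Nonempty M.α) :
    ∀ β : Ordinal.{u}, ∀ γ ≤ β, ∀ (n : ℕ) (N : τ.Structure (Lev B (n + 1)))
      (f : Lev B (n + 1) → M.α), SatF A B M β n N f → SatF A B M γ n N f := by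
  intro β
  induction β using Ordinal.induction with
  | h β ih =>
  intro γ hγ n N f hf
  rcases eq_or_lt_of_le hγ with rfl | hlt
  · exact hf
  rcases Ordinal.zero_or_succ_or_isSuccLimit β with rfl | ⟨β', rfl⟩ | hβlim
  · exact absurd hlt (not_lt_zero (a := γ))
  · have key : SatF A B M β' n N f := by
      rcases Ordinal.zero_or_succ_or_isSuccLimit β' with rfl | ⟨β'', rfl⟩ | hβ'lim
      · rw [satF_succ] at hf
        obtain ⟨N', -, hts, g, hgf, hg0, -⟩ := hf (fun _ => hMne.some)
        rw [satF_zero] at hg0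
        rw [satF_zero]
        rw [isEmbFun_def] at hg0
        obtain ⟨ge, hge⟩ := hg0
        rw [treeStrong_def] at hts
        obtain ⟨te, hte, -⟩ := hts
        rw [isEmbFun_def]
        refine ⟨ge.comp te, ?_⟩
        funext x
        have : (ge.comp te) x = g (Lev.incl (Nat.le_succ _) x) := by
          simp [Embedding.comp_apply, hge, hte]
        rw [this, ← hgf]
        rfl
      · rw [satF_succ] at hf ⊢
        intro z
        obtain ⟨N', h1, h2, g, h3, h4, h5⟩ := hf z
        exact ⟨N', h1, h2, g, h3,
          ih _ (Order.lt_succ _) _ (le_of_lt (Order.lt_succ _)) _ _ _ h4, h5⟩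
      · rw [satF_limit _ _ _ hβ'lim]
        intro δ hδ
        have hsd : SatF A B M (Order.succ δ) n N f := by
          rw [satF_succ] at hf ⊢
          intro z
          obtain ⟨N', h1, h2, g, h3, h4, h5⟩ := hf z
          rw [satF_limit _ _ _ hβ'lim] at h4
          exact ⟨N', h1, h2, g, h3, h4 δ hδ, h5⟩
        have hlt2 : Order.succ δ < Order.succ β' := by
          rw [Order.succ_lt_succ_iff]
          exact hδ
        exact ih (Order.succ δ) hlt2 δ (le_of_lt (Order.lt_succ δ)) _ _ _ hsd
    rcases eq_or_lt_of_le (Order.lt_succ_iff.mp hlt) with rfl | h2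
    · exact key
    · exact ih β' (Order.lt_succ _) γ (le_of_lt h2) _ _ _ key
  · rw [satF_limit _ _ _ hβlim] at hf
    exact hf γ hlt

theorem satF_emb (hBne : Nonempty B) (hMne : Nonempty M.α) (β : Ordinal.{u})
    (n : ℕ) (N : τ.Structure (Lev B (n + 1)))
    (f : Lev B (n + 1) → M.α) (hf : SatF A B M β n N f) : IsEmbFun τ N M.str f := by
  rcases Ordinal.zero_or_succ_or_isSuccLimit β with rfl | ⟨β', rfl⟩ | hlim
  · rwa [satF_zero] at hf
  case inr.inr =>
    rw [satF_limit _ _ _ hlim] at hf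
    have h0 := hf 0 hlim.pos
    rwa [satF_zero] at h0
  have h1 : SatF A B M (Order.succ 0) n N f :=
    satF_mono A B M hBne hMne _ _ (Order.succ_le_succ (zero_le (a := β'))) n N f hf
  rw [satF_succ] at h1
  obtain ⟨N', -, hts, g, hgf, hg0, -⟩ := h1 (fun _ => hMne.some)
  rw [satF_zero, isEmbFun_def] at hg0
  obtain ⟨ge, hge⟩ := hg0
  rw [treeStrong_def] at hts
  obtain ⟨te, hte, -⟩ := hts
  rw [isEmbFun_def]
  refine ⟨ge.comp te, ?_⟩
  funext x
  have : (ge.comp te) x = g (Lev.incl (Nat.le_succ _) x) := by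
    simp [Embedding.comp_apply, hge, hte]
  rw [this, ← hgf]
  rfl


section Cardinality

open Cardinal

theorem lev_nonempty {B : Type u} (hBne : Nonempty B) (m : ℕ) : Nonempty (Lev B (m + 1)) :=
  ⟨⟨(0, hBne.some), Nat.succ_pos m⟩⟩

theorem mk_lev_le {B : Type u} {κ : Cardinal.{u}} (hκ : ℵ₀ ≤ κ) (hB : #B = κ) (m : ℕ) :
    #(Lev B m) ≤ κ := by
  have h0 : #(Lev B m) ≤ #(ℕ × B) := Cardinal.mk_subtype_le _
  have h1 : #(ℕ × B) = #(ULift.{u} ℕ × B) :=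
    Cardinal.mk_congr (Equiv.prodCongr Equiv.ulift.symm (Equiv.refl B))
  have h2 : #(ULift.{u} ℕ × B) = ℵ₀ * κ := by
    rw [Cardinal.mk_prod, Cardinal.lift_id, Cardinal.lift_id, Cardinal.mk_uLift,
      Cardinal.mk_nat, Cardinal.lift_aleph0, hB]
  have h3 : ℵ₀ * κ = κ := Cardinal.aleph0_mul_eq hκ
  rw [h1, h2, h3] at h0
  exact h0

theorem mk_funtype_le {X Y : Type u} {κ : Cardinal.{u}} (hκ : ℵ₀ ≤ κ)
    (hX : #X ≤ κ) (hY : #Y ≤ κ) : #(X → Y) ≤ (2 : Cardinal.{u}) ^ κ := by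
  have h1 : #(X → Y) = #Y ^ #X := (Cardinal.power_def Y X).symm
  rw [h1]
  calc #Y ^ #X ≤ κ ^ #X := Cardinal.power_le_power_right hY
    _ ≤ κ ^ κ := Cardinal.power_le_power_left (fun h0 => by
        rw [h0] at hκ; exact (Cardinal.aleph0_pos.trans_le hκ).ne' rfl) hX
    _ = (2 : Cardinal.{u}) ^ κ := Cardinal.power_self_eq hκ

theorem mk_structure_le {κ : Cardinal.{u}} (hκ : ℵ₀ ≤ κ) (hτκ : τ.card ≤ κ)
    (X : Type u) (hXne : Nonempty X) (hX : #X ≤ κ) :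
    #(τ.Structure X) ≤ (2 : Cardinal.{u}) ^ ((2 : Cardinal.{u}) ^ κ) := by
  classical
  let E : Type u := ULift.{u} ℕ → X
  let CF : Type u := (Σ n : ℕ, τ.Functions n) × E
  let CR : Type u := (Σ n : ℕ, τ.Relations n) × E
  let code : τ.Structure X → (CF → X) × Set CR := fun S =>
    (fun q => S.funMap q.1.2 (fun i => q.2 ⟨(i : ℕ)⟩),
     {q | S.RelMap q.1.2 (fun i => q.2 ⟨(i : ℕ)⟩)})
  have key : ∀ (n : ℕ) (v : Fin n → X),
      (fun i : Fin n =>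
        (fun k : ULift.{u} ℕ => if hlt : k.down < n then v ⟨k.down, hlt⟩ else hXne.some)
          ⟨(i : ℕ)⟩) = v := by
    intro n v
    funext i
    simp only [ULift.up_down]
    rw [dif_pos i.isLt]
  have hinj : Function.Injective code := by
    intro S₁ S₂ hcode
    have h1 : (code S₁).1 = (code S₂).1 := by rw [hcode]
    have h2 : (code S₁).2 = (code S₂).2 := by rw [hcode]
    have hF : @Structure.funMap τ X S₁ = @Structure.funMap τ X S₂ := by
      funext n F v
      have h3 := congrFun h1
        ⟨⟨n, F⟩, fun k : ULift.{u} ℕ => if hlt : k.down < n then v ⟨k.down, hlt⟩ else hXne.some⟩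
      simp only [code] at h3
      rw [key n v] at h3
      exact h3
    have hR : @Structure.RelMap τ X S₁ = @Structure.RelMap τ X S₂ := by
      funext n R v
      have h3 := Set.ext_iff.mp h2
        ⟨⟨n, R⟩, fun k : ULift.{u} ℕ => if hlt : k.down < n then v ⟨k.down, hlt⟩ else hXne.some⟩
      simp only [code, Set.mem_setOf_eq] at h3
      rw [key n v] at h3
      exact propext h3
    cases S₁
    cases S₂
    congr
  have hle : #(τ.Structure X) ≤ #((CF → X) × Set CR) := Cardinal.mk_le_of_injective hinj
  have hκ0 : (κ : Cardinal.{u}) ≠ 0 := fun h0 => by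
    rw [h0] at hκ; exact (Cardinal.aleph0_pos.trans_le hκ).ne' rfl
  have hE : #E ≤ (2 : Cardinal.{u}) ^ κ := by
    have : #(ULift.{u} ℕ) ≤ κ := by
      rw [Cardinal.mk_uLift, Cardinal.mk_nat, Cardinal.lift_aleph0]; exact hκ
    exact mk_funtype_le hκ this hX
  have hκ2 : κ ≤ 2 ^ κ := (Cardinal.cantor κ).le
  have haleph2 : ℵ₀ ≤ 2 ^ κ := hκ.trans hκ2
  have hCF : #CF ≤ (2 : Cardinal.{u}) ^ κ := by
    have hs : #(Σ n : ℕ, τ.Functions n) ≤ κ :=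
      (Cardinal.mk_le_of_injective (Sum.inl_injective
        (α := Σ n : ℕ, τ.Functions n) (β := Σ n : ℕ, τ.Relations n))).trans hτκ
    calc #CF = Cardinal.lift.{u} #(Σ n : ℕ, τ.Functions n) * Cardinal.lift.{u} #E :=
          Cardinal.mk_prod _ _
      _ = #(Σ n : ℕ, τ.Functions n) * #E := by rw [Cardinal.lift_id, Cardinal.lift_id]
      _ ≤ ((2 : Cardinal.{u}) ^ κ) * ((2 : Cardinal.{u}) ^ κ) := mul_le_mul' (hs.trans hκ2) hE
      _ = (2 : Cardinal.{u}) ^ κ := Cardinal.mul_eq_self haleph2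
  have hCR : #CR ≤ (2 : Cardinal.{u}) ^ κ := by
    have hs : #(Σ n : ℕ, τ.Relations n) ≤ κ :=
      (Cardinal.mk_le_of_injective (Sum.inr_injective
        (α := Σ n : ℕ, τ.Functions n) (β := Σ n : ℕ, τ.Relations n))).trans hτκ
    calc #CR = Cardinal.lift.{u} #(Σ n : ℕ, τ.Relations n) * Cardinal.lift.{u} #E :=
          Cardinal.mk_prod _ _
      _ = #(Σ n : ℕ, τ.Relations n) * #E := by rw [Cardinal.lift_id, Cardinal.lift_id]
      _ ≤ ((2 : Cardinal.{u}) ^ κ) * ((2 : Cardinal.{u}) ^ κ) := mul_le_mul' (hs.trans hκ2) hE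
      _ = (2 : Cardinal.{u}) ^ κ := Cardinal.mul_eq_self haleph2
  have hpow : ((2 : Cardinal.{u}) ^ κ) ^ ((2 : Cardinal.{u}) ^ κ)
      = (2 : Cardinal.{u}) ^ ((2 : Cardinal.{u}) ^ κ) := by
    rw [← Cardinal.power_mul]
    congr 1
    exact Cardinal.mul_eq_right haleph2 hκ2 hκ0
  have h2κ0 : ((2 : Cardinal.{u}) ^ κ) ≠ 0 := fun h0 => by
    rw [h0] at haleph2; exact (Cardinal.aleph0_pos.trans_le haleph2).ne' rfl
  have hfun : #(CF → X) ≤ (2 : Cardinal.{u}) ^ ((2 : Cardinal.{u}) ^ κ) := by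
    have h1 : #(CF → X) = #X ^ #CF := (Cardinal.power_def X CF).symm
    rw [h1, ← hpow]
    exact (Cardinal.power_le_power_right (hX.trans hκ2)).trans
      (Cardinal.power_le_power_left h2κ0 hCF)
  have hset : #(Set CR) ≤ (2 : Cardinal.{u}) ^ ((2 : Cardinal.{u}) ^ κ) := by
    rw [Cardinal.mk_set]
    exact Cardinal.power_le_power_left two_ne_zero hCR
  have haleph22 : ℵ₀ ≤ (2 : Cardinal.{u}) ^ ((2 : Cardinal.{u}) ^ κ) :=
    haleph2.trans (Cardinal.power_le_power_left two_ne_zero hκ2)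
  calc #(τ.Structure X) ≤ #((CF → X) × Set CR) := hle
    _ = Cardinal.lift.{u} #(CF → X) * Cardinal.lift.{u} #(Set CR) := Cardinal.mk_prod _ _
    _ = #(CF → X) * #(Set CR) := by rw [Cardinal.lift_id, Cardinal.lift_id]
    _ ≤ ((2 : Cardinal.{u}) ^ ((2 : Cardinal.{u}) ^ κ)) * ((2 : Cardinal.{u}) ^ ((2 : Cardinal.{u}) ^ κ)) :=
          mul_le_mul' hfun hset
    _ = (2 : Cardinal.{u}) ^ ((2 : Cardinal.{u}) ^ κ) := Cardinal.mul_eq_self haleph22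

theorem exists_cover {B : Type u} {κ : Cardinal.{u}} (hκ : ℵ₀ ≤ κ) (hB : #B = κ) (m : ℕ) :
    ∃ s : B → Lev B (m + 1), Function.Surjective s := by
  classical
  have h1 : #B = #(ULift.{u} ℕ × B) := by
    rw [Cardinal.mk_prod, Cardinal.lift_id, Cardinal.lift_id, Cardinal.mk_uLift,
      Cardinal.mk_nat, Cardinal.lift_aleph0, hB, Cardinal.aleph0_mul_eq hκ]
  obtain ⟨φ⟩ := Cardinal.eq.mp h1
  refine ⟨fun b => if hlt : (φ b).1.down < m + 1 then ⟨((φ b).1.down, (φ b).2), hlt⟩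
    else ⟨(0, (φ b).2), Nat.succ_pos m⟩, ?_⟩
  rintro ⟨⟨i, c⟩, hic⟩
  refine ⟨φ.symm ⟨⟨i⟩, c⟩, ?_⟩
  have hφ : φ (φ.symm ⟨⟨i⟩, c⟩) = ⟨⟨i⟩, c⟩ := φ.apply_symm_apply _
  simp only [hφ]
  exact dif_pos (by rw [hφ]; exact hic)

end Cardinality

end SatF



section Config

variable (A : AECData τ) (B : Type u)

/-- An abstract configuration: a ladder level consisting of a pair of canonical-tree
models together with an embedding of the first into the second. -/
def Conf (k : ℕ) : Type u :=
  {c : (τ.Structure (Lev B (k + 1)) × τ.Structure (Lev B (k + 1))) ×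
      (Lev B (k + 1) → Lev B (k + 1)) //
    c.1.1 ∈ SNode A B (k + 1) ∧ c.1.2 ∈ SNode A B (k + 1) ∧ IsEmbFun τ c.1.1 c.1.2 c.2}

variable {A B}

def Conf.N {k : ℕ} (X : Conf A B k) : τ.Structure (Lev B (k + 1)) := X.1.1.1

def Conf.P {k : ℕ} (X : Conf A B k) : τ.Structure (Lev B (k + 1)) := X.1.1.2

def Conf.u {k : ℕ} (X : Conf A B k) : Lev B (k + 1) → Lev B (k + 1) := X.1.2

theorem Conf.hN {k : ℕ} (X : Conf A B k) : X.N ∈ SNode A B (k + 1) := X.2.1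

theorem Conf.hP {k : ℕ} (X : Conf A B k) : X.P ∈ SNode A B (k + 1) := X.2.2.1

theorem Conf.hu {k : ℕ} (X : Conf A B k) : IsEmbFun τ X.N X.P X.u := X.2.2.2

theorem snode_K {n : ℕ} {N : τ.Structure (Lev B n)} (h : N ∈ SNode A B n) :
    (⟨Lev B n, N⟩ : BStr τ) ∈ A.K := h.1

theorem mk_conf_le {κ : Cardinal.{u}} (hκ : ℵ₀ ≤ κ) (hτκ : τ.card ≤ κ) (hB : #B = κ)
    (hBne : Nonempty B) (k : ℕ) :
    #(Conf A B k) ≤ (2 : Cardinal.{u}) ^ ((2 : Cardinal.{u}) ^ κ) := by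
  have hG : ℵ₀ ≤ (2 : Cardinal.{u}) ^ ((2 : Cardinal.{u}) ^ κ) :=
    (hκ.trans (Cardinal.cantor κ).le).trans
      (Cardinal.power_le_power_left two_ne_zero (Cardinal.cantor κ).le)
  have hstr : #(τ.Structure (Lev B (k + 1))) ≤ (2 : Cardinal.{u}) ^ ((2 : Cardinal.{u}) ^ κ) :=
    mk_structure_le hκ hτκ (Lev B (k + 1)) (lev_nonempty hBne k) (mk_lev_le hκ hB _)
  have hmap : #(Lev B (k + 1) → Lev B (k + 1)) ≤ (2 : Cardinal.{u}) ^ ((2 : Cardinal.{u}) ^ κ) :=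
    (mk_funtype_le hκ (mk_lev_le hκ hB _) (mk_lev_le hκ hB _)).trans
      (Cardinal.power_le_power_left two_ne_zero (Cardinal.cantor κ).le)
  have h1 : #(τ.Structure (Lev B (k + 1)) × τ.Structure (Lev B (k + 1)))
      ≤ (2 : Cardinal.{u}) ^ ((2 : Cardinal.{u}) ^ κ) := by
    calc #(τ.Structure (Lev B (k + 1)) × τ.Structure (Lev B (k + 1)))
        = Cardinal.lift.{u} #(τ.Structure (Lev B (k + 1)))
            * Cardinal.lift.{u} #(τ.Structure (Lev B (k + 1))) := Cardinal.mk_prod _ _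
      _ = #(τ.Structure (Lev B (k + 1))) * #(τ.Structure (Lev B (k + 1))) := by
            rw [Cardinal.lift_id]
      _ ≤ ((2 : Cardinal.{u}) ^ ((2 : Cardinal.{u}) ^ κ))
            * ((2 : Cardinal.{u}) ^ ((2 : Cardinal.{u}) ^ κ)) := mul_le_mul' hstr hstr
      _ = (2 : Cardinal.{u}) ^ ((2 : Cardinal.{u}) ^ κ) := Cardinal.mul_eq_self hG
  calc #(Conf A B k)
      ≤ #((τ.Structure (Lev B (k + 1)) × τ.Structure (Lev B (k + 1)))
          × (Lev B (k + 1) → Lev B (k + 1))) := Cardinal.mk_subtype_le _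
    _ = Cardinal.lift.{u} #(τ.Structure (Lev B (k + 1)) × τ.Structure (Lev B (k + 1)))
          * Cardinal.lift.{u} #(Lev B (k + 1) → Lev B (k + 1)) := Cardinal.mk_prod _ _
    _ = #(τ.Structure (Lev B (k + 1)) × τ.Structure (Lev B (k + 1)))
          * #(Lev B (k + 1) → Lev B (k + 1)) := by rw [Cardinal.lift_id, Cardinal.lift_id]
    _ ≤ ((2 : Cardinal.{u}) ^ ((2 : Cardinal.{u}) ^ κ))
          * ((2 : Cardinal.{u}) ^ ((2 : Cardinal.{u}) ^ κ)) := mul_le_mul' h1 hmap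
    _ = (2 : Cardinal.{u}) ^ ((2 : Cardinal.{u}) ^ κ) := Cardinal.mul_eq_self hG

/-- The extension relation between consecutive configurations. -/
structure ExtRel (A : AECData τ) {B : Type u} {k : ℕ} (X : Conf A B k)
    (X' : Conf A B (k + 1)) : Prop where
  tN : TreeStrong A (Nat.le_succ (k + 1)) X.N X'.N
  tP : TreeStrong A (Nat.le_succ (k + 1)) X.P X'.P
  hv : ∃ v : Lev B (k + 1) → Lev B (k + 2), IsEmbFun τ X.P X'.N v ∧
      (∀ x, v (X.u x) = Lev.incl (Nat.le_succ (k + 1)) x) ∧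
      (∀ x, X'.u (v x) = Lev.incl (Nat.le_succ (k + 1)) x)

/-- A configuration is realized in `M` at stage `β` over the base maps `f₁, f₂`. -/
def Realz (A : AECData τ) (B : Type u) (M : BStr τ) (f₁ f₂ : Lev B 1 → M.α) {k : ℕ}
    (X : Conf A B k) (β : Ordinal.{u}) : Prop :=
  ∃ g h : Lev B (k + 1) → M.α,
    (∀ x, g (Lev.incl (Nat.le_add_left 1 k) x) = f₁ x) ∧
    (∀ x, h (Lev.incl (Nat.le_add_left 1 k) x) = f₂ x) ∧
    (∀ x, h (X.u x) = g x) ∧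
    SatF A B M β k X.N g ∧ SatF A B M β k X.P h

/-- A configuration is big if it is realized at arbitrarily large stages below `Λ`. -/
def Big (A : AECData τ) (B : Type u) (M : BStr τ) (f₁ f₂ : Lev B 1 → M.α) {k : ℕ}
    (X : Conf A B k) (Λ : Ordinal.{u}) : Prop :=
  ∀ δ < Λ, ∃ β, δ ≤ β ∧ β < Λ ∧ Realz A B M f₁ f₂ X β

theorem big_ext {A : AECData τ} {κ : Cardinal.{u}} (hA : AECAxioms A κ) {B : Type u}
    (hB : #B = κ) (hBne : Nonempty B) (M : BStr τ) (hMne : Nonempty M.α)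
    (f₁ f₂ : Lev B 1 → M.α) {k : ℕ} (X : Conf A B k)
    (hbig : Big A B M f₁ f₂ X
      (Order.succ (Order.succ ((2 : Cardinal.{u}) ^ (2 : Cardinal.{u}) ^ κ))).ord) :
    ∃ X' : Conf A B (k + 1), ExtRel A X X' ∧ Big A B M f₁ f₂ X'
      (Order.succ (Order.succ ((2 : Cardinal.{u}) ^ (2 : Cardinal.{u}) ^ κ))).ord := by
  classical
  set c : Cardinal.{u} := Order.succ (Order.succ ((2 : Cardinal.{u}) ^ (2 : Cardinal.{u}) ^ κ))
    with hc_def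
  set Λ : Ordinal.{u} := c.ord with hΛ_def
  have hκ : ℵ₀ ≤ κ := hA.infinite_lst
  have hG : ℵ₀ ≤ (2 : Cardinal.{u}) ^ ((2 : Cardinal.{u}) ^ κ) :=
    (hκ.trans (Cardinal.cantor κ).le).trans
      (Cardinal.power_le_power_left two_ne_zero (Cardinal.cantor κ).le)
  have hc1 : ℵ₀ ≤ Order.succ ((2 : Cardinal.{u}) ^ (2 : Cardinal.{u}) ^ κ) :=
    hG.trans (Order.le_succ _)
  have hc : ℵ₀ ≤ c := hc1.trans (Order.le_succ _)
  have hΛlim : Order.IsSuccLimit Λ := Cardinal.isSuccLimit_ord hc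
  have hreg : c.IsRegular := Cardinal.isRegular_succ hc1
  have hcof : Λ.cof = c := hreg.cof_eq
  -- bounds for non-big configurations
  have hD : ∀ Y : Conf A B (k + 1), ∃ δ : Ordinal.{u}, δ < Λ ∧
      (¬ Big A B M f₁ f₂ Y Λ → ∀ β, δ ≤ β → β < Λ → ¬ Realz A B M f₁ f₂ Y β) := by
    intro Y
    by_cases hY : Big A B M f₁ f₂ Y Λ
    · exact ⟨0, hΛlim.pos, fun hn => absurd hY hn⟩
    · have hY' := hY
      unfold Big at hY'
      push_neg at hY'
      obtain ⟨δ, hδΛ, hδ⟩ := hY'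
      exact ⟨δ, hδΛ, fun _ => hδ⟩
  choose D hDlt hDspec using hD
  have hmkconf : #(Conf A B (k + 1)) < Λ.cof := by
    rw [hcof]
    exact lt_of_le_of_lt (mk_conf_le hκ hA.card_le hB hBne (k + 1))
      ((Order.lt_succ _).trans (Order.lt_succ _))
  have hδ₀ : iSup D < Λ := Ordinal.iSup_lt_ord hmkconf hDlt
  set δ₀ : Ordinal.{u} := iSup D with hδ₀_def
  have hstage2 : Order.succ (Order.succ δ₀) < Λ := hΛlim.succ_lt (hΛlim.succ_lt hδ₀)
  obtain ⟨β, hβ1, hβ2, g, h, hgf1, hhf2, hhu, hsg, hsh⟩ := hbig _ hstage2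
  -- move to the stage δ₀ + 2
  have hsg2 : SatF A B M (Order.succ (Order.succ δ₀)) k X.N g :=
    satF_mono A B M hBne hMne β _ hβ1 k X.N g hsg
  have hsh2 : SatF A B M (Order.succ (Order.succ δ₀)) k X.P h :=
    satF_mono A B M hBne hMne β _ hβ1 k X.P h hsh
  obtain ⟨s, hs⟩ := exists_cover hκ hB k
  rw [satF_succ] at hsg2
  obtain ⟨N', hN', htsN, g', hgg', hsg', hzg⟩ := hsg2 (h ∘ s)
  have hcovg : ∀ q : Lev B (k + 1), ∃ p, h q = g' p := by
    intro q
    obtain ⟨b, hb⟩ := hs q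
    obtain ⟨p, hp⟩ := hzg b
    exact ⟨p, by rw [← hb]; exact hp⟩
  have hsh3 : SatF A B M (Order.succ δ₀) k X.P h :=
    satF_mono A B M hBne hMne _ _ (le_of_lt (Order.lt_succ _)) k X.P h hsh2
  obtain ⟨s', hs'⟩ := exists_cover hκ hB (k + 1)
  rw [satF_succ] at hsh3
  obtain ⟨P', hP', htsP, h', hhh', hsh', hzh⟩ := hsh3 (g' ∘ s')
  have hcovh : ∀ q : Lev B (k + 2), ∃ p, g' q = h' p := by
    intro q
    obtain ⟨b, hb⟩ := hs' q
    obtain ⟨p, hp⟩ := hzh b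
    exact ⟨p, by rw [← hb]; exact hp⟩
  -- embeddings
  obtain ⟨ge', hge'⟩ := (isEmbFun_def (τ := τ) N' M.str g').mp
    (satF_emb A B M hBne hMne _ _ _ _ hsg')
  obtain ⟨he', hhe'⟩ := (isEmbFun_def (τ := τ) P' M.str h').mp
    (satF_emb A B M hBne hMne _ _ _ _ hsh')
  obtain ⟨hemb, hhemb⟩ := (isEmbFun_def (τ := τ) X.P M.str h).mp
    (satF_emb A B M hBne hMne _ _ _ _ hsh)
  have hg'inj : Function.Injective g' := by
    intro a b hab
    apply @Language.Embedding.injective τ (Lev B (k + 2)) M.α N' M.str ge'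
    rw [hge']
    exact hab
  have hh'inj : Function.Injective h' := by
    intro a b hab
    apply @Language.Embedding.injective τ (Lev B (k + 2)) M.α P' M.str he'
    rw [hhe']
    exact hab
  -- the new ladder maps
  have hrv : ∀ x, ∃ y, ge' y = hemb x := by
    intro x
    obtain ⟨p, hp⟩ := hcovg x
    exact ⟨p, by rw [hge', hhemb, hp]⟩
  obtain ⟨v, hveq⟩ : ∃ vv : @Language.Embedding τ (Lev B (k + 1)) (Lev B (k + 2)) X.P N',
      ∀ x, g' (vv x) = h x := by
    refine ⟨@factorEmb τ _ _ _ X.P N' M.str hemb ge' hrv, fun x => ?_⟩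
    have h1 := @factorEmb_prop τ _ _ _ X.P N' M.str hemb ge' hrv x
    rw [hge', hhemb] at h1
    exact h1
  have hru : ∀ x, ∃ y, he' y = ge' x := by
    intro x
    obtain ⟨p, hp⟩ := hcovh x
    exact ⟨p, by rw [hhe', hge', hp]⟩
  obtain ⟨u', hueq⟩ : ∃ uu : @Language.Embedding τ (Lev B (k + 2)) (Lev B (k + 2)) N' P',
      ∀ x, h' (uu x) = g' x := by
    refine ⟨@factorEmb τ _ _ _ N' P' M.str ge' he' hru, fun x => ?_⟩
    have h1 := @factorEmb_prop τ _ _ _ N' P' M.str ge' he' hru x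
    rw [hhe', hge'] at h1
    exact h1
  -- the new configuration
  refine ⟨⟨⟨⟨N', P'⟩, ⇑u'⟩, hN', hP',
    (isEmbFun_def (τ := τ) N' P' ⇑u').mpr ⟨u', rfl⟩⟩, ⟨htsN, htsP, ?_⟩, ?_⟩
  · refine ⟨⇑v, (isEmbFun_def (τ := τ) X.P N' ⇑v).mpr ⟨v, rfl⟩, ?_, ?_⟩
    · intro x
      apply hg'inj
      rw [hveq, hhu]
      exact (congrFun hgg' x).symm
    · intro x
      show u' (v x) = Lev.incl (Nat.le_succ (k + 1)) x
      apply hh'inj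
      rw [hueq, hveq]
      exact (congrFun hhh' x).symm
  · -- bigness of the new configuration
    by_contra hn
    refine hDspec _ hn δ₀ (Ordinal.le_iSup D _) hδ₀ ?_
    refine ⟨g', h', ?_, ?_, hueq, ?_, ?_⟩
    · intro x
      have h1 : g' (Lev.incl (Nat.le_add_left 1 (k + 1)) x)
          = g' (Lev.incl (Nat.le_succ (k + 1)) (Lev.incl (Nat.le_add_left 1 k) x)) :=
        congrArg g' (Subtype.ext rfl)
      rw [h1]
      have h2 := congrFun hgg' (Lev.incl (Nat.le_add_left 1 k) x)
      rw [show (g' ∘ Lev.incl (Nat.le_succ (k + 1))) (Lev.incl (Nat.le_add_left 1 k) x)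
          = g' (Lev.incl (Nat.le_succ (k + 1)) (Lev.incl (Nat.le_add_left 1 k) x)) from rfl]
        at h2
      rw [h2]
      exact hgf1 x
    · intro x
      have h1 : h' (Lev.incl (Nat.le_add_left 1 (k + 1)) x)
          = h' (Lev.incl (Nat.le_succ (k + 1)) (Lev.incl (Nat.le_add_left 1 k) x)) :=
        congrArg h' (Subtype.ext rfl)
      rw [h1]
      have h2 := congrFun hhh' (Lev.incl (Nat.le_add_left 1 k) x)
      rw [show (h' ∘ Lev.incl (Nat.le_succ (k + 1))) (Lev.incl (Nat.le_add_left 1 k) x)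
          = h' (Lev.incl (Nat.le_succ (k + 1)) (Lev.incl (Nat.le_add_left 1 k) x)) from rfl]
        at h2
      rw [h2]
      exact hhf2 x
    · exact satF_mono A B M hBne hMne _ _ (le_of_lt (Order.lt_succ _)) _ _ _ hsg'
    · exact hsh'

end Config


/-- Wrapper for the carriers of the direct-limit system (kept separate from `Lev` so that
local instances on it do not pollute instance search for `Lev`). -/
def LevU (B : Type u) (i : ULift.{u} ℕ) : Type u := Lev B (i.down + 1)

theorem emb_mem_range {X Y : Type u} (sX : τ.Structure X) (sY : τ.Structure Y)
    (f : @Language.Embedding τ X Y sX sY) (y : Y) :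
    y ∈ (@Language.Embedding.toHom τ X Y sX sY f).range ↔ ∃ x, f x = y := by
  letI := sX
  letI := sY
  rw [Language.Hom.mem_range]
  exact exists_congr fun x => by rw [Language.Embedding.coe_toHom]

section Strong

variable {A : AECData τ} {κ : Cardinal.{u}}

theorem strong_incl_of_eq (hA : AECAxioms A κ) (Mb : BStr τ) {S T : τ.Substructure Mb.α}
    (hST : S = T) (hs : S ≤ T) (hK : Mb.ofSub S ∈ A.K) :
    A.strong (Substructure.inclusion hs) := by
  subst hST
  have h1 : Substructure.inclusion hs = Language.Embedding.refl τ S := by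
    rw [Subsingleton.elim hs (le_refl S)]
    exact Substructure.inclusion_self S
  rw [h1]
  exact hA.strong_refl (Mb.ofSub S) hK

theorem strong_incl_sandwich (hA : AECAxioms A κ) (Mb : BStr τ) {X Y : BStr τ}
    (ex : X.α ↪[τ] Mb.α) (ey : Y.α ↪[τ] Mb.α) (e : X.α ↪[τ] Y.α)
    (he : A.strong e) (hcomm : ∀ x, ey (e x) = ex x)
    (hs : ex.toHom.range ≤ ey.toHom.range) :
    A.strong (Substructure.inclusion hs) := by
  have h0 := hA.strong_iso X (Mb.ofSub ex.toHom.range) Y (Mb.ofSub ey.toHom.range)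
    ex.equivRange.symm e ey.equivRange he
  have h1 : ((ey.equivRange.toEmbedding.comp e).comp ex.equivRange.symm.toEmbedding)
      = Substructure.inclusion hs := by
    apply Language.Embedding.ext
    intro x
    apply Subtype.ext
    show ey (e (ex.equivRange.symm x)) = (x : Mb.α)
    rw [hcomm]
    exact emb_apply_equivRange_symm ex x
  rw [← h1]
  exact h0

theorem strong_emb_of_subtype (hA : AECAxioms A κ) (Mb : BStr τ) {X : BStr τ}
    (ex : X.α ↪[τ] Mb.α) (hst : A.strong (ex.toHom.range).subtype) : A.strong ex := by
  have h0 := hA.strong_iso (Mb.ofSub ex.toHom.range) X Mb Mb ex.equivRange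
    (ex.toHom.range).subtype (Language.Equiv.refl τ Mb.α) hst
  have h1 : (((Language.Equiv.refl τ Mb.α).toEmbedding.comp (ex.toHom.range).subtype).comp
      ex.equivRange.toEmbedding) = ex := by
    apply Language.Embedding.ext
    intro x
    rfl
  rw [← h1]
  exact h0

end Strong

end CanonAux

end Auxiliary

/-- any two members `N*₁ ⊆ N*₂` of the family `G` (with `γ = λ = ℶ₂(κ)⁺⁺`)
satisfy `N*₁ ≺_K N*₂`. -/
theorem canonG_coherent (A : AECData τ) (κ : Cardinal.{u}) (hA : AECAxioms A κ)
    (B : Type u) (hB : #B = κ) (M : BStr τ)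
    (S₁ S₂ : τ.Substructure M.α)
    (hS₁ : S₁ ∈ CanonG A B κ M (Order.succ (Order.succ ((2 : Cardinal.{u}) ^ (2 : Cardinal.{u}) ^ κ))).ord)
    (hS₂ : S₂ ∈ CanonG A B κ M (Order.succ (Order.succ ((2 : Cardinal.{u}) ^ (2 : Cardinal.{u}) ^ κ))).ord)
    (h : S₁ ≤ S₂) :
    A.strong (Language.Substructure.inclusion h) := by
  classical
  open CanonAux in
  set c : Cardinal.{u} := Order.succ (Order.succ ((2 : Cardinal.{u}) ^ (2 : Cardinal.{u}) ^ κ))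
    with hc_def
  obtain ⟨hcard₁, N₁, hN₁, f₁, hef₁, hr₁, hsat₁⟩ := hS₁
  obtain ⟨hcard₂, N₂, hN₂, f₂, hef₂, hr₂, hsat₂⟩ := hS₂
  have hκ : ℵ₀ ≤ κ := hA.infinite_lst
  have hκ0 : κ ≠ 0 := fun h0 => by
    rw [h0] at hκ; exact (Cardinal.aleph0_pos.trans_le hκ).ne' rfl
  have hBne : Nonempty B := by
    rw [← Cardinal.mk_ne_zero_iff, hB]
    exact hκ0
  have hG2 : ℵ₀ ≤ (2 : Cardinal.{u}) ^ ((2 : Cardinal.{u}) ^ κ) :=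
    (hκ.trans (Cardinal.cantor κ).le).trans
      (Cardinal.power_le_power_left two_ne_zero (Cardinal.cantor κ).le)
  have hcinf : ℵ₀ ≤ c := (hG2.trans (Order.le_succ _)).trans (Order.le_succ _)
  have hclim : Order.IsSuccLimit (c.ord) := Cardinal.isSuccLimit_ord hcinf
  obtain ⟨f₁e, hf₁e⟩ := (CanonAux.isEmbFun_def (τ := τ) N₁ M.str f₁).mp hef₁
  obtain ⟨f₂e, hf₂e⟩ := (CanonAux.isEmbFun_def (τ := τ) N₂ M.str f₂).mp hef₂
  have hMne : Nonempty M.α := ⟨f₁ (CanonAux.lev_nonempty hBne 0).some⟩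
  -- the base ladder map
  have hr12 : ∀ x, ∃ y, f₂e y = f₁e x := by
    intro x
    have hx1 : f₁ x ∈ (S₁ : Set M.α) := by rw [← hr₁]; exact Set.mem_range_self x
    have hx2 : f₁ x ∈ (S₂ : Set M.α) := h hx1
    rw [← hr₂] at hx2
    obtain ⟨y, hy⟩ := hx2
    exact ⟨y, by rw [hf₂e, hf₁e]; exact hy⟩
  obtain ⟨u₀, hu₀⟩ : ∃ uu : @Language.Embedding τ (Lev B 1) (Lev B 1) N₁ N₂,
      ∀ x, f₂ (uu x) = f₁ x := by
    refine ⟨@CanonAux.factorEmb τ _ _ _ N₁ N₂ M.str f₁e f₂e hr12, fun x => ?_⟩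
    have h1 := @CanonAux.factorEmb_prop τ _ _ _ N₁ N₂ M.str f₁e f₂e hr12 x
    rw [hf₂e, hf₁e] at h1
    exact h1
  -- the base configuration and its bigness
  let X₀ : CanonAux.Conf A B 0 := ⟨⟨⟨N₁, N₂⟩, ⇑u₀⟩, hN₁, hN₂,
    (CanonAux.isEmbFun_def (τ := τ) N₁ N₂ ⇑u₀).mpr ⟨u₀, rfl⟩⟩
  have hX₀big : CanonAux.Big A B M f₁ f₂ X₀ c.ord := by
    intro δ hδ
    refine ⟨δ, le_refl δ, hδ, f₁, f₂, ?_, ?_, hu₀, ?_, ?_⟩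
    · intro x; exact congrArg f₁ (Subtype.ext rfl)
    · intro x; exact congrArg f₂ (Subtype.ext rfl)
    · rw [CanonAux.satF_limit A B M hclim] at hsat₁
      exact hsat₁ δ hδ
    · rw [CanonAux.satF_limit A B M hclim] at hsat₂
      exact hsat₂ δ hδ
  -- the chain of big configurations
  have hstep : ∀ k (X : CanonAux.Conf A B k), CanonAux.Big A B M f₁ f₂ X c.ord →
      ∃ X' : CanonAux.Conf A B (k + 1), CanonAux.ExtRel A X X' ∧
        CanonAux.Big A B M f₁ f₂ X' c.ord :=
    fun k X hX => CanonAux.big_ext hA hB hBne M hMne f₁ f₂ X hX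
  let Ch : ∀ k : ℕ, {X : CanonAux.Conf A B k // CanonAux.Big A B M f₁ f₂ X c.ord} :=
    fun k => Nat.rec (motive := fun k => {X : CanonAux.Conf A B k //
        CanonAux.Big A B M f₁ f₂ X c.ord})
      ⟨X₀, hX₀big⟩
      (fun k p => ⟨(hstep k p.1 p.2).choose, (hstep k p.1 p.2).choose_spec.2⟩) k
  let Xs : ∀ k : ℕ, CanonAux.Conf A B k := fun k => (Ch k).1
  have hCh : ∀ k, CanonAux.ExtRel A (Xs k) (Xs (k + 1)) :=
    fun k => (hstep k (Ch k).1 (Ch k).2).choose_spec.1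
  have hXs0 : Xs 0 = X₀ := rfl
  -- the one-step ladder embeddings
  have hNstep : ∀ k, ∃ e : @Language.Embedding τ (Lev B (k + 1)) (Lev B (k + 2))
      (Xs k).N (Xs (k + 1)).N,
      ⇑e = Lev.incl (Nat.le_succ (k + 1)) ∧ @AECData.strong τ A _ _ (Xs k).N (Xs (k + 1)).N e :=
    fun k => (CanonAux.treeStrong_def A _ _ _).mp (hCh k).tN
  have hPstep : ∀ k, ∃ e : @Language.Embedding τ (Lev B (k + 1)) (Lev B (k + 2))
      (Xs k).P (Xs (k + 1)).P,
      ⇑e = Lev.incl (Nat.le_succ (k + 1)) ∧ @AECData.strong τ A _ _ (Xs k).P (Xs (k + 1)).P e :=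
    fun k => (CanonAux.treeStrong_def A _ _ _).mp (hCh k).tP
  choose eN heN hsN using hNstep
  choose eP heP hsP using hPstep
  choose vf hvEmb hv1 hv2 using fun k => (hCh k).hv
  have hvemb : ∀ k, ∃ ve : @Language.Embedding τ (Lev B (k + 1)) (Lev B (k + 2))
      (Xs k).P (Xs (k + 1)).N, ⇑ve = vf k :=
    fun k => (CanonAux.isEmbFun_def (τ := τ) (Xs k).P (Xs (k + 1)).N (vf k)).mp (hvEmb k)
  choose ve hve using hvemb
  have huemb : ∀ k, ∃ ue : @Language.Embedding τ (Lev B (k + 1)) (Lev B (k + 1))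
      (Xs k).N (Xs k).P, ⇑ue = (Xs k).u :=
    fun k => (CanonAux.isEmbFun_def (τ := τ) (Xs k).N (Xs k).P (Xs k).u).mp (Xs k).hu
  choose ue hue using huemb
  -- the transitive ladder embeddings
  have hEex : ∀ k l (hkl : k ≤ l), ∃ e : @Language.Embedding τ (Lev B (k + 1)) (Lev B (l + 1))
      (Xs k).N (Xs l).N, ⇑e = Lev.incl (Nat.succ_le_succ hkl) ∧ @AECData.strong τ A _ _ (Xs k).N (Xs l).N e := by
    intro k l hkl
    induction l, hkl using Nat.le_induction with
    | base =>
      refine ⟨@Language.Embedding.refl τ (Lev B (k + 1)) ((Xs k).N), ?_, ?_⟩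
      · funext x
        exact Subtype.ext rfl
      · exact hA.strong_refl ⟨Lev B (k + 1), (Xs k).N⟩ (CanonAux.snode_K (Xs k).hN)
    | succ l hkl ih =>
      obtain ⟨e, he, hse⟩ := ih
      refine ⟨@Language.Embedding.comp τ (Lev B (k + 1)) (Lev B (l + 1)) ((Xs k).N)
        ((Xs l).N) (Lev B (l + 2)) ((Xs (l + 1)).N) (eN l) e, ?_, ?_⟩
      · funext x
        show eN l (e x) = Lev.incl (Nat.succ_le_succ (hkl.trans (Nat.le_succ l))) x
        rw [show e x = Lev.incl (Nat.succ_le_succ hkl) x from congrFun he x,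
          show eN l (Lev.incl (Nat.succ_le_succ hkl) x)
            = Lev.incl (Nat.le_succ (l + 1)) (Lev.incl (Nat.succ_le_succ hkl) x)
            from congrFun (heN l) _]
        exact Subtype.ext rfl
      · exact hA.strong_trans ⟨Lev B (k + 1), (Xs k).N⟩ ⟨Lev B (l + 1), (Xs l).N⟩
          ⟨Lev B (l + 2), (Xs (l + 1)).N⟩ e (eN l) hse (hsN l)
  choose EE hEE hsEE using hEex
  have hPEex : ∀ k l (hkl : k ≤ l), ∃ e : @Language.Embedding τ (Lev B (k + 1)) (Lev B (l + 1))
      (Xs k).P (Xs l).P, ⇑e = Lev.incl (Nat.succ_le_succ hkl) ∧ @AECData.strong τ A _ _ (Xs k).P (Xs l).P e := by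
    intro k l hkl
    induction l, hkl using Nat.le_induction with
    | base =>
      refine ⟨@Language.Embedding.refl τ (Lev B (k + 1)) ((Xs k).P), ?_, ?_⟩
      · funext x
        exact Subtype.ext rfl
      · exact hA.strong_refl ⟨Lev B (k + 1), (Xs k).P⟩ (CanonAux.snode_K (Xs k).hP)
    | succ l hkl ih =>
      obtain ⟨e, he, hse⟩ := ih
      refine ⟨@Language.Embedding.comp τ (Lev B (k + 1)) (Lev B (l + 1)) ((Xs k).P)
        ((Xs l).P) (Lev B (l + 2)) ((Xs (l + 1)).P) (eP l) e, ?_, ?_⟩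
      · funext x
        show eP l (e x) = Lev.incl (Nat.succ_le_succ (hkl.trans (Nat.le_succ l))) x
        rw [show e x = Lev.incl (Nat.succ_le_succ hkl) x from congrFun he x,
          show eP l (Lev.incl (Nat.succ_le_succ hkl) x)
            = Lev.incl (Nat.le_succ (l + 1)) (Lev.incl (Nat.succ_le_succ hkl) x)
            from congrFun (heP l) _]
        exact Subtype.ext rfl
      · exact hA.strong_trans ⟨Lev B (k + 1), (Xs k).P⟩ ⟨Lev B (l + 1), (Xs l).P⟩
          ⟨Lev B (l + 2), (Xs (l + 1)).P⟩ e (eP l) hse (hsP l)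
  choose PE hPE hsPE using hPEex
  -- the direct limit
  let G : ULift.{u} ℕ → Type u := CanonAux.LevU B
  letI iG : ∀ i : ULift.{u} ℕ, τ.Structure (G i) := fun i => (Xs i.down).N
  let Esys : ∀ i j : ULift.{u} ℕ, i ≤ j → (G i ↪[τ] G j) :=
    fun i j hij => EE i.down j.down hij
  haveI hdirected : IsDirected (ULift.{u} ℕ) (· ≤ ·) :=
    ⟨fun a b => ⟨⟨max a.down b.down⟩, le_max_left _ _, le_max_right _ _⟩⟩
  haveI : Nonempty (ULift.{u} ℕ) := ⟨⟨0⟩⟩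
  haveI hsys : DirectedSystem G (fun i j h => Esys i j h) := by
    constructor
    · intro i x
      rw [show Esys i i le_rfl x = Lev.incl (Nat.succ_le_succ le_rfl) x
        from congrFun (hEE i.down i.down le_rfl) x]
      exact Subtype.ext rfl
    · intro k j i hij hjk x
      rw [show Esys i j hij x = Lev.incl (Nat.succ_le_succ hij) x
          from congrFun (hEE i.down j.down hij) x,
        show Esys j k hjk (Lev.incl (Nat.succ_le_succ hij) x)
          = Lev.incl (Nat.succ_le_succ hjk) (Lev.incl (Nat.succ_le_succ hij) x)
          from congrFun (hEE j.down k.down hjk) _,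
        show Esys i k (hij.trans hjk) x = Lev.incl (Nat.succ_le_succ (hij.trans hjk)) x
          from congrFun (hEE i.down k.down (hij.trans hjk)) x]
      exact Subtype.ext rfl
  let U : Type u := Language.DirectLimit G Esys
  let UB : BStr τ := ⟨U, inferInstance⟩
  let jk : ∀ i : ULift.{u} ℕ, (G i ↪[τ] U) := fun i => Language.DirectLimit.of τ _ G Esys i
  let Sfam : ULift.{u} ℕ → τ.Substructure UB.α := fun i => (jk i).toHom.range
  have hmono1 : ∀ i j : ULift.{u} ℕ, i ≤ j → Sfam i ≤ Sfam j := by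
    intro i j hij x hx
    obtain ⟨a, ha⟩ := Language.Hom.mem_range.1 hx
    refine Language.Hom.mem_range.2 ⟨Esys i j hij a, ?_⟩
    show jk j (Esys i j hij a) = x
    rw [Language.DirectLimit.of_f]
    exact ha
  -- first application of the union axiom
  obtain ⟨hUK, hUstrong⟩ := hA.union UB (ULift.{u} ℕ) ⟨⟨0⟩⟩ Sfam
    (fun i j => ⟨⟨max i.down j.down⟩, hmono1 i _ (le_max_left _ _),
      hmono1 j _ (le_max_right _ _)⟩)
    (fun i => hA.iso_closed ⟨G i, iG i⟩ (UB.ofSub (Sfam i))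
      (CanonAux.snode_K (Xs i.down).hN) (jk i).equivRange)
    (fun i j hs => by
      rcases le_total i j with hij | hji
      · refine CanonAux.strong_incl_sandwich hA UB (X := ⟨G i, iG i⟩) (Y := ⟨G j, iG j⟩)
          (jk i) (jk j) (Esys i j hij) (hsEE i.down j.down hij) ?_ hs
        intro x
        exact Language.DirectLimit.of_f
      · exact CanonAux.strong_incl_of_eq hA UB (le_antisymm hs (hmono1 j i hji)) hs
          (hA.iso_closed ⟨G i, iG i⟩ (UB.ofSub (Sfam i))
            (CanonAux.snode_K (Xs i.down).hN) (jk i).equivRange))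
    (fun x => by
      obtain ⟨i, a, ha⟩ := Language.DirectLimit.exists_of
        (show Language.DirectLimit G Esys from x)
      exact ⟨i, Language.Hom.mem_range.2 ⟨a, ha⟩⟩)
  -- the second ladder inside the direct limit
  let hhat : ∀ k : ℕ, (@Language.Embedding τ (Lev B (k + 1)) U ((Xs k).P) inferInstance) :=
    fun k => @Language.Embedding.comp τ (Lev B (k + 1)) (G ⟨k + 1⟩) ((Xs k).P) (iG ⟨k + 1⟩)
      U inferInstance (jk ⟨k + 1⟩) (ve k)
  have hhat_step : ∀ k (x : Lev B (k + 1)),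
      hhat (k + 1) (Lev.incl (Nat.le_succ (k + 1)) x) = hhat k x := by
    intro k x
    show jk ⟨k + 2⟩ (ve (k + 1) (Lev.incl (Nat.le_succ (k + 1)) x)) = jk ⟨k + 1⟩ (ve k x)
    have e1 : ve (k + 1) (Lev.incl (Nat.le_succ (k + 1)) x)
        = vf (k + 1) ((Xs (k + 1)).u (vf k x)) := by
      rw [hve (k + 1), hv2 k x]
    have e2 : vf (k + 1) ((Xs (k + 1)).u (vf k x))
        = Lev.incl (Nat.le_succ (k + 2)) (vf k x) := hv1 (k + 1) (vf k x)
    have e3 : Lev.incl (Nat.le_succ (k + 2)) (vf k x)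
        = Esys ⟨k + 1⟩ ⟨k + 2⟩ (Nat.le_succ (k + 1)) (vf k x) :=
      (congrFun (hEE (k + 1) (k + 2) (Nat.le_succ (k + 1))) _).symm
    rw [e1, e2, e3, hve k]
    exact Language.DirectLimit.of_f
  have hhat_comp : ∀ k l (hkl : k ≤ l) (x : Lev B (k + 1)),
      hhat l (Lev.incl (Nat.succ_le_succ hkl) x) = hhat k x := by
    intro k l hkl
    induction l, hkl using Nat.le_induction with
    | base =>
      intro x
      exact congrArg (hhat k) (Subtype.ext rfl)
    | succ l hkl ih =>
      intro x
      have e1 : Lev.incl (Nat.succ_le_succ (hkl.trans (Nat.le_succ l))) x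
          = Lev.incl (Nat.le_succ (l + 1)) (Lev.incl (Nat.succ_le_succ hkl) x) :=
        Subtype.ext rfl
      rw [e1, hhat_step l, ih]
  have hweave : ∀ k (x : Lev B (k + 1)), hhat k (ue k x) = jk ⟨k⟩ x := by
    intro k x
    show jk ⟨k + 1⟩ (ve k (ue k x)) = jk ⟨k⟩ x
    have e1 : ve k (ue k x) = Lev.incl (Nat.le_succ (k + 1)) x := by
      rw [hve k, hue k]
      exact hv1 k x
    have e2 : Lev.incl (Nat.le_succ (k + 1)) x
        = Esys ⟨k⟩ ⟨k + 1⟩ (Nat.le_succ k) x :=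
      (congrFun (hEE k (k + 1) (Nat.le_succ k)) _).symm
    rw [e1, e2]
    exact Language.DirectLimit.of_f
  let Tfam : ULift.{u} ℕ → τ.Substructure UB.α := fun i =>
    @Language.Hom.range τ (Lev B (i.down + 1)) U ((Xs i.down).P) inferInstance
      (@Language.Embedding.toHom τ (Lev B (i.down + 1)) U ((Xs i.down).P) inferInstance
        (hhat i.down))
  have hmono2 : ∀ i j : ULift.{u} ℕ, i ≤ j → Tfam i ≤ Tfam j := by
    intro i j hij x hx
    obtain ⟨a, ha⟩ := (CanonAux.emb_mem_range ((Xs i.down).P) inferInstance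
      (hhat i.down) x).1 hx
    refine (CanonAux.emb_mem_range ((Xs j.down).P) inferInstance (hhat j.down) x).2
      ⟨Lev.incl (Nat.succ_le_succ hij) a, ?_⟩
    rw [hhat_comp i.down j.down hij a]
    exact ha
  have hST : ∀ i : ULift.{u} ℕ, Sfam i ≤ Tfam i := by
    intro i x hx
    obtain ⟨a, ha⟩ := Language.Hom.mem_range.1 hx
    refine (CanonAux.emb_mem_range ((Xs i.down).P) inferInstance (hhat i.down) x).2
      ⟨ue i.down a, ?_⟩
    rw [hweave i.down a]
    exact ha
  -- second application of the union axiom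
  obtain ⟨hUK2, hUstrong2⟩ := hA.union UB (ULift.{u} ℕ) ⟨⟨0⟩⟩ Tfam
    (fun i j => ⟨⟨max i.down j.down⟩, hmono2 i _ (le_max_left _ _),
      hmono2 j _ (le_max_right _ _)⟩)
    (fun i => hA.iso_closed ⟨Lev B (i.down + 1), (Xs i.down).P⟩ (UB.ofSub (Tfam i))
      (CanonAux.snode_K (Xs i.down).hP)
      (@Language.Embedding.equivRange τ (Lev B (i.down + 1)) U ((Xs i.down).P) inferInstance
        (hhat i.down)))
    (fun i j hs => by
      rcases le_total i j with hij | hji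
      · refine CanonAux.strong_incl_sandwich hA UB (X := ⟨Lev B (i.down + 1), (Xs i.down).P⟩)
          (Y := ⟨Lev B (j.down + 1), (Xs j.down).P⟩)
          (hhat i.down) (hhat j.down) (PE i.down j.down hij) (hsPE i.down j.down hij) ?_ hs
        intro x
        rw [show PE i.down j.down hij x = Lev.incl (Nat.succ_le_succ hij) x
          from congrFun (hPE i.down j.down hij) x]
        exact hhat_comp i.down j.down hij x
      · exact CanonAux.strong_incl_of_eq hA UB (le_antisymm hs (hmono2 j i hji)) hs
          (hA.iso_closed ⟨Lev B (i.down + 1), (Xs i.down).P⟩ (UB.ofSub (Tfam i))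
            (CanonAux.snode_K (Xs i.down).hP)
            (@Language.Embedding.equivRange τ (Lev B (i.down + 1)) U ((Xs i.down).P)
              inferInstance (hhat i.down))))
    (fun x => by
      obtain ⟨i, a, ha⟩ := Language.DirectLimit.exists_of
        (show Language.DirectLimit G Esys from x)
      exact ⟨i, hST i (Language.Hom.mem_range.2 ⟨a, ha⟩)⟩)
  -- coherence: the base inclusion inside the limit is strong
  have hS0T0 : Sfam ⟨0⟩ ≤ Tfam ⟨0⟩ := hST ⟨0⟩
  have hcompST : A.strong ((Tfam ⟨0⟩).subtype.comp (Language.Substructure.inclusion hS0T0)) := by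
    have hid : (Tfam ⟨0⟩).subtype.comp (Language.Substructure.inclusion hS0T0)
        = (Sfam ⟨0⟩).subtype := rfl
    rw [hid]
    exact hUstrong ⟨0⟩
  have hincl0 : A.strong (Language.Substructure.inclusion hS0T0) :=
    hA.coherence (UB.ofSub (Sfam ⟨0⟩)) (UB.ofSub (Tfam ⟨0⟩)) UB
      (Language.Substructure.inclusion hS0T0) (Tfam ⟨0⟩).subtype hcompST (hUstrong2 ⟨0⟩)
  -- strongness of the bottom embeddings into the limit
  have hjk0 : A.strong (jk ⟨0⟩) :=
    CanonAux.strong_emb_of_subtype hA UB (X := ⟨G ⟨0⟩, iG ⟨0⟩⟩) (jk ⟨0⟩) (hUstrong ⟨0⟩)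
  have hhat0 : @AECData.strong τ A _ _ ((Xs 0).P) inferInstance (hhat 0) :=
    CanonAux.strong_emb_of_subtype hA UB (X := ⟨Lev B 1, (Xs 0).P⟩) (hhat 0) (hUstrong2 ⟨0⟩)
  have hcomp2 : @AECData.strong τ A _ _ ((Xs 0).N) inferInstance
      (@Language.Embedding.comp τ (Lev B 1) (Lev B 1) ((Xs 0).N) ((Xs 0).P) U inferInstance
        (hhat 0) (ue 0)) := by
    refine CanonAux.strong_congr A (e := jk ⟨0⟩) (fun x => (hweave 0 x).symm) hjk0
  have hue0 : @AECData.strong τ A _ _ ((Xs 0).N) ((Xs 0).P) (ue 0) :=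
    hA.coherence ⟨Lev B 1, (Xs 0).N⟩ ⟨Lev B 1, (Xs 0).P⟩ UB (ue 0) (hhat 0) hcomp2 hhat0
  -- transfer back to the substructures of M
  have hr₁' : @Language.Hom.range τ (Lev B 1) M.α N₁ M.str
      (@Language.Embedding.toHom τ (Lev B 1) M.α N₁ M.str f₁e) = S₁ := by
    apply SetLike.ext'
    rw [@Language.Hom.range_coe τ (Lev B 1) M.α N₁ M.str,
      @Language.Embedding.coe_toHom τ (Lev B 1) M.α N₁ M.str f₁e, hf₁e, hr₁]
  have hr₂' : @Language.Hom.range τ (Lev B 1) M.α N₂ M.str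
      (@Language.Embedding.toHom τ (Lev B 1) M.α N₂ M.str f₂e) = S₂ := by
    apply SetLike.ext'
    rw [@Language.Hom.range_coe τ (Lev B 1) M.α N₂ M.str,
      @Language.Embedding.coe_toHom τ (Lev B 1) M.α N₂ M.str f₂e, hf₂e, hr₂]
  subst hr₁'
  subst hr₂'
  refine CanonAux.strong_incl_sandwich hA M (X := ⟨Lev B 1, N₁⟩) (Y := ⟨Lev B 1, N₂⟩)
    f₁e f₂e (ue 0) hue0 ?_ h
  intro x
  exact (congrFun hf₂e _).trans ((congrArg f₂ (congrFun (hue 0) x)).trans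
    ((hu₀ x).trans (congrFun hf₁e x).symm))
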